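/- For all i, j ∈ {1, 2, 3}, n_jᵀ φ_HHJ^i n_j = δ_{ij}. -/

import Mathlib

noncomputable section
open MeasureTheory

namespace PaperStmt

/-- Euclidean dot product on `ℝ²`. -/
def dotp (v w : ℝ × ℝ) : ℝ := v.1 * w.1 + v.2 * w.2

/-- Euclidean length on `ℝ²`. -/
def len (v : ℝ × ℝ) : ℝ := Real.sqrt (v.1 ^ 2 + v.2 ^ 2)

/-- Cross product (determinant) of two planar vectors. -/
def crossp (v w : ℝ × ℝ) : ℝ := v.1 * w.2 - v.2 * w.1

/-- The vertices `p 0, p 1, p 2` form a nondegenerate triangle listed counterclockwise. -/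
def Ccw (p : Fin 3 → ℝ × ℝ) : Prop := 0 < crossp (p 1 - p 0) (p 2 - p 0)

/-- Vector of the edge `e_i` opposite vertex `p i`, oriented counterclockwise
(from `p (i+1)` to `p (i−1)`). -/
def edgeVec (p : Fin 3 → ℝ × ℝ) (i : Fin 3) : ℝ × ℝ := p (i - 1) - p (i + 1)

/-- Length `|e_i|` of the edge opposite vertex `p i`. -/
def elen (p : Fin 3 → ℝ × ℝ) (i : Fin 3) : ℝ := len (edgeVec p i)

/-- Unit tangent `t_i = (p_{i−1} − p_{i+1})/|e_i|` of edge `e_i`. -/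
def tvec (p : Fin 3 → ℝ × ℝ) (i : Fin 3) : ℝ × ℝ := (elen p i)⁻¹ • edgeVec p i

/-- Outward unit normal `n_i` of edge `e_i` (clockwise rotation of the tangent,
which points outward for a counterclockwise triangle). -/
def nvec (p : Fin 3 → ℝ × ℝ) (i : Fin 3) : ℝ × ℝ := ((tvec p i).2, -(tvec p i).1)

/-- Interior angle `θ_i` of the triangle at the vertex `p i`. -/
def angleAt (p : Fin 3 → ℝ × ℝ) (i : Fin 3) : ℝ :=
  Real.arccos (dotp (p (i + 1) - p i) (p (i - 1) - p i) /
    (len (p (i + 1) - p i) * len (p (i - 1) - p i)))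

/-- Outer product `v wᵀ` of two planar (column) vectors, as a `2 × 2` matrix. -/
def outerProd (v w : ℝ × ℝ) : Matrix (Fin 2) (Fin 2) ℝ :=
  !![v.1 * w.1, v.1 * w.2; v.2 * w.1, v.2 * w.2]

/-- Basis matrices `φ_HHJ^i = −(1/(2 sin θ_{i−1} sin θ_{i+1})) (t_{i−1} t_{i+1}ᵀ + t_{i+1} t_{i−1}ᵀ)`
of the lowest-order Hellan–Herrmann–Johnson element. -/
def phiHHJ (p : Fin 3 → ℝ × ℝ) (i : Fin 3) : Matrix (Fin 2) (Fin 2) ℝ :=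
  (-(2 * Real.sin (angleAt p (i - 1)) * Real.sin (angleAt p (i + 1)))⁻¹) •
    (outerProd (tvec p (i - 1)) (tvec p (i + 1)) + outerProd (tvec p (i + 1)) (tvec p (i - 1)))

/-- The quadratic form `vᵀ τ v` of a `2 × 2` matrix on a planar vector. -/
def qf (τ : Matrix (Fin 2) (Fin 2) ℝ) (v : ℝ × ℝ) : ℝ :=
  v.1 * (τ 0 0 * v.1 + τ 0 1 * v.2) + v.2 * (τ 1 0 * v.1 + τ 1 1 * v.2)

end PaperStmt


namespace PaperStmt

lemma len_sq (v : ℝ × ℝ) : len v ^ 2 = v.1 ^ 2 + v.2 ^ 2 :=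
  Real.sq_sqrt (by positivity)

lemma len_pos_left {v w : ℝ × ℝ} (h : 0 < crossp v w) : 0 < len v := by
  apply Real.sqrt_pos.mpr
  simp only [crossp] at h
  nlinarith [sq_nonneg (v.1 * w.1 + v.2 * w.2), sq_nonneg w.1, sq_nonneg w.2,
    sq_nonneg v.1, sq_nonneg v.2, mul_pos h h]

lemma len_sub_comm (x y : ℝ × ℝ) : len (x - y) = len (y - x) := by
  simp only [len, Prod.fst_sub, Prod.snd_sub]
  ring_nf

lemma sin_angle (u w : ℝ × ℝ) (h : 0 < crossp u w) :
    Real.sin (Real.arccos (dotp u w / (len u * len w))) = crossp u w / (len u * len w) := by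
  have hu : 0 < len u := len_pos_left h
  have hw : 0 < len w := by
    apply Real.sqrt_pos.mpr
    simp only [crossp] at h
    nlinarith [sq_nonneg (u.1 * w.1 + u.2 * w.2), sq_nonneg w.1, sq_nonneg w.2,
      sq_nonneg u.1, sq_nonneg u.2, mul_pos h h]
  rw [Real.sin_arccos]
  have key : 1 - (dotp u w / (len u * len w)) ^ 2 = (crossp u w / (len u * len w)) ^ 2 := by
    have h1 := len_sq u
    have h2 := len_sq w
    field_simp
    simp only [dotp, crossp]
    nlinarith [h1, h2, sq_nonneg (len u), sq_nonneg (len w)]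
  rw [key, Real.sqrt_sq (le_of_lt (div_pos h (mul_pos hu hw)))]

lemma qf_smul (c : ℝ) (M : Matrix (Fin 2) (Fin 2) ℝ) (v : ℝ × ℝ) :
    qf (c • M) v = c * qf M v := by
  simp only [qf, Matrix.smul_apply, smul_eq_mul]; ring

lemma qf_outer_pair (v w n : ℝ × ℝ) :
    qf (outerProd v w + outerProd w v) n = 2 * (dotp n v) * (dotp n w) := by
  simp [qf, outerProd, dotp, Matrix.vecHead]
  ring

lemma dotp_nt (p : Fin 3 → ℝ × ℝ) (j k : Fin 3) :
    dotp (nvec p j) (tvec p k)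
      = (elen p k)⁻¹ * ((elen p j)⁻¹ * crossp (edgeVec p k) (edgeVec p j)) := by
  simp only [dotp, nvec, tvec, crossp, Prod.smul_fst, Prod.smul_snd, smul_eq_mul]
  ring

end PaperStmt

set_option maxHeartbeats 1000000 in
open PaperStmt in
/-- Duality of the HHJ basis matrices with the normal-normal degrees of freedom:
`n_jᵀ φ_HHJ^i n_j = δ_{ij}`. -/
theorem phiHHJ_dual_basis (p : Fin 3 → ℝ × ℝ) (hp : Ccw p) (i j : Fin 3) :
    qf (phiHHJ p i) (nvec p j) = if i = j then 1 else 0 := by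

  have hS : 0 < crossp (p 1 - p 0) (p 2 - p 0) := hp
  have hS' : 0 < crossp (p 2 - p 1) (p 0 - p 1) := by
    simp only [crossp, Prod.fst_sub, Prod.snd_sub] at hS ⊢; linarith
  have hS'' : 0 < crossp (p 0 - p 2) (p 1 - p 2) := by
    simp only [crossp, Prod.fst_sub, Prod.snd_sub] at hS ⊢; linarith
  have ha : 0 < len (p 1 - p 0) := len_pos_left hS
  have hb : 0 < len (p 2 - p 1) := len_pos_left hS'
  have hc : 0 < len (p 0 - p 2) := len_pos_left hS''
  have e1 : len (p 2 - p 0) = len (p 0 - p 2) := len_sub_comm _ _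
  have e2 : len (p 0 - p 1) = len (p 1 - p 0) := len_sub_comm _ _
  have e3 : len (p 1 - p 2) = len (p 2 - p 1) := len_sub_comm _ _
  have hsin0 : Real.sin (angleAt p 0)
      = crossp (p 1 - p 0) (p 2 - p 0) / (len (p 1 - p 0) * len (p 0 - p 2)) := by
    have h := sin_angle (p 1 - p 0) (p 2 - p 0) hS
    simp only [angleAt, show (0:Fin 3) + 1 = 1 from rfl, show (0:Fin 3) - 1 = 2 from rfl, e1] at h ⊢
    rw [h]
  have hsin1 : Real.sin (angleAt p 1)
      = crossp (p 1 - p 0) (p 2 - p 0) / (len (p 2 - p 1) * len (p 1 - p 0)) := by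
    have h := sin_angle (p 2 - p 1) (p 0 - p 1) hS'
    simp only [angleAt, show (1:Fin 3) + 1 = 2 from rfl, show (1:Fin 3) - 1 = 0 from rfl, e2] at h ⊢
    rw [h]; congr 1
    simp only [crossp, Prod.fst_sub, Prod.snd_sub]; ring
  have hsin2 : Real.sin (angleAt p 2)
      = crossp (p 1 - p 0) (p 2 - p 0) / (len (p 0 - p 2) * len (p 2 - p 1)) := by
    have h := sin_angle (p 0 - p 2) (p 1 - p 2) hS''
    simp only [angleAt, show (2:Fin 3) + 1 = 0 from rfl, show (2:Fin 3) - 1 = 1 from rfl, e3] at h ⊢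
    rw [h]; congr 1
    simp only [crossp, Prod.fst_sub, Prod.snd_sub]; ring
  have hx1 : crossp (p 1 - p 0) (p 2 - p 1) = crossp (p 1 - p 0) (p 2 - p 0) := by
    simp only [crossp, Prod.fst_sub, Prod.snd_sub]; ring
  have hx2 : crossp (p 2 - p 1) (p 1 - p 0) = -crossp (p 1 - p 0) (p 2 - p 0) := by
    simp only [crossp, Prod.fst_sub, Prod.snd_sub]; ring
  have hx3 : crossp (p 2 - p 1) (p 0 - p 2) = crossp (p 1 - p 0) (p 2 - p 0) := by
    simp only [crossp, Prod.fst_sub, Prod.snd_sub]; ring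
  have hx4 : crossp (p 0 - p 2) (p 2 - p 1) = -crossp (p 1 - p 0) (p 2 - p 0) := by
    simp only [crossp, Prod.fst_sub, Prod.snd_sub]; ring
  have hx5 : crossp (p 0 - p 2) (p 1 - p 0) = crossp (p 1 - p 0) (p 2 - p 0) := by
    simp only [crossp, Prod.fst_sub, Prod.snd_sub]; ring
  have hx6 : crossp (p 1 - p 0) (p 0 - p 2) = -crossp (p 1 - p 0) (p 2 - p 0) := by
    simp only [crossp, Prod.fst_sub, Prod.snd_sub]; ring
  have hz1 : crossp (p 2 - p 1) (p 2 - p 1) = 0 := by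
    simp only [crossp]; ring
  have hz2 : crossp (p 0 - p 2) (p 0 - p 2) = 0 := by
    simp only [crossp]; ring
  have hz3 : crossp (p 1 - p 0) (p 1 - p 0) = 0 := by
    simp only [crossp]; ring
  have ha' := ha.ne'
  have hb' := hb.ne'
  have hc' := hc.ne'
  have hS0 : crossp (p 1 - p 0) (p 2 - p 0) ≠ 0 := hS.ne'
  fin_cases i <;> fin_cases j <;>
    simp only [Fin.zero_eta, Fin.mk_one, Fin.reduceFinMk, Fin.isValue, phiHHJ,
      show (0:Fin 3) + 1 = 1 from rfl, show (0:Fin 3) - 1 = 2 from rfl,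
      show (1:Fin 3) + 1 = 2 from rfl, show (1:Fin 3) - 1 = 0 from rfl,
      show (2:Fin 3) + 1 = 0 from rfl, show (2:Fin 3) - 1 = 1 from rfl,
      qf_smul, qf_outer_pair, dotp_nt, hsin0, hsin1, hsin2, elen, edgeVec,
      hx1, hx2, hx3, hx4, hx5, hx6, hz1, hz2, hz3, Fin.reduceEq, reduceIte, if_true] <;>
  first
  | (field_simp <;> ring)
  | simp
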